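/- Let d ≥ 1, let E = {E_i}_{i=1}^{d²} be a measure basis for d×d complex matrices with all weights strictly positive, and let U be a d×d unitary matrix. Then the family {U E_i U†} is a measure basis with the same weights and the same Gram matrix as E, and its principal Wigner basis is the unitary conjugate of that of E: PW({U E_i U†})_i = U·PW(E)_i·U† for all i. -/

import Mathlib

open Matrix BigOperators
open scoped ComplexOrder Kronecker

/-- A measure basis: a linearly independent family of `d²` Hermitian `d×d` complex
matrices summing to the identity, with nonnegative traces. -/
def IsMeasureBasis {d : ℕ} (L : Fin (d ^ 2) → Matrix (Fin d) (Fin d) ℂ) : Prop :=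
  (∀ i, (L i).IsHermitian) ∧ LinearIndependent ℝ L ∧ (∑ i, L i) = 1 ∧ ∀ i, 0 ≤ ((L i).trace).re

/-- A Wigner basis: an orthogonal measure basis. -/
def IsWignerBasis {d : ℕ} (L : Fin (d ^ 2) → Matrix (Fin d) (Fin d) ℂ) : Prop :=
  IsMeasureBasis L ∧ ∀ i j, i ≠ j → (L i * L j).trace = 0

/-- The rescaled frame operator `S_L(X) = ∑ⱼ (tr(X Lⱼ)/lⱼ) Lⱼ`. -/
noncomputable def rsFrameOp {n : Type*} [Fintype n] {m : Type*} [Fintype m] [DecidableEq m]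
    (L : n → Matrix m m ℂ) (X : Matrix m m ℂ) : Matrix m m ℂ :=
  ∑ j, (((X * L j).trace) / ((L j).trace)) • L j

/-- A map on matrices that is ℝ-linear, Hermiticity-preserving, self-adjoint with respect to
the Hilbert–Schmidt inner product on Hermitian matrices, and positive. -/
def IsPosSelfAdjMap {m : Type*} [Fintype m]
    (T : Matrix m m ℂ → Matrix m m ℂ) : Prop :=
  IsLinearMap ℝ T ∧ (∀ X, X.IsHermitian → (T X).IsHermitian) ∧
  (∀ X Y, X.IsHermitian → Y.IsHermitian → (T X * Y).trace = (X * T Y).trace) ∧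
  (∀ X, X.IsHermitian → 0 ≤ ((X * T X).trace).re)

/-- `T` is the (unique) positive self-adjoint inverse square root of the rescaled frame
operator of `L`, i.e. `S_L ∘ T ∘ T = id` on Hermitian matrices; `PW(L) i = T (L i)`. -/
def IsInvSqrtOfFrameOp {n : Type*} [Fintype n] {m : Type*} [Fintype m] [DecidableEq m]
    (L : n → Matrix m m ℂ) (T : Matrix m m ℂ → Matrix m m ℂ) : Prop :=
  IsPosSelfAdjMap T ∧ ∀ X : Matrix m m ℂ, X.IsHermitian → rsFrameOp L (T (T X)) = X

namespace PWUC

/-! ### Auxiliary facts about traces of Hermitian matrices -/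

lemma trace_herm_real' {m : Type*} [Fintype m] {X Y : Matrix m m ℂ}
    (hX : X.IsHermitian) (hY : Y.IsHermitian) :
    (starRingEnd ℂ) ((X * Y).trace) = (X * Y).trace := by
  rw [starRingEnd_apply, ← Matrix.trace_conjTranspose, conjTranspose_mul, hX.eq, hY.eq,
    trace_mul_comm]

lemma herm_smul_complex {m : Type*} [Fintype m] {M : Matrix m m ℂ} (hM : M.IsHermitian)
    {c : ℂ} (hc : (starRingEnd ℂ) c = c) : (c • M).IsHermitian := by
  have hc' : star c = c := hc
  unfold Matrix.IsHermitian
  rw [conjTranspose_smul, hM.eq, hc']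

lemma trace_herm_conj {m : Type*} [Fintype m] {X : Matrix m m ℂ} (hX : X.IsHermitian) :
    (starRingEnd ℂ) (X.trace) = X.trace := by
  rw [starRingEnd_apply, ← Matrix.trace_conjTranspose, hX.eq]

lemma rsFrameOp_herm {n : Type*} [Fintype n] {m : Type*} [Fintype m] [DecidableEq m]
    {L : n → Matrix m m ℂ} (hL : ∀ i, (L i).IsHermitian) {X : Matrix m m ℂ}
    (hX : X.IsHermitian) : (rsFrameOp L X).IsHermitian := by
  unfold rsFrameOp Matrix.IsHermitian
  rw [conjTranspose_sum]
  refine Finset.sum_congr rfl fun j _ => ?_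
  rw [conjTranspose_smul, (hL j).eq]
  congr 1
  rw [star_div₀]
  rw [show star ((X * L j).trace) = (X * L j).trace from trace_herm_real' hX (hL j),
    show star ((L j).trace) = (L j).trace from trace_herm_conj (hL j)]

lemma rsFrameOp_linear {n : Type*} [Fintype n] {m : Type*} [Fintype m] [DecidableEq m]
    (L : n → Matrix m m ℂ) : IsLinearMap ℝ (rsFrameOp L) := by
  constructor
  · intro X Y
    simp only [rsFrameOp, add_mul, trace_add, add_div, add_smul, Finset.sum_add_distrib]
  · intro r X
    simp only [rsFrameOp, Matrix.smul_mul, trace_smul, Finset.smul_sum]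
    congr 1
    ext j
    rw [show (r • (X * L j).trace) / (L j).trace = r • ((X * L j).trace / (L j).trace) from
      smul_div_assoc r _ _, smul_assoc]

/-! ### The real inner product space of Hermitian matrices -/

lemma trace_sq_re_eq {d : ℕ} {X : Matrix (Fin d) (Fin d) ℂ} (hX : X.IsHermitian) :
    ((X * X).trace).re = ∑ j, ∑ k, Complex.normSq (X k j) := by
  nth_rewrite 1 [← hX.eq]
  simp only [Matrix.trace, Matrix.diag, Matrix.mul_apply, conjTranspose_apply]
  rw [Complex.re_sum]
  refine Finset.sum_congr rfl fun j _ => ?_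
  rw [Complex.re_sum]
  refine Finset.sum_congr rfl fun k _ => ?_
  simp only [Complex.normSq_apply, Complex.mul_re, Complex.star_def,
    Complex.conj_re, Complex.conj_im]
  ring

/-- The submodule of Hermitian matrices. -/
noncomputable def HermSub (d : ℕ) : Submodule ℝ (Matrix (Fin d) (Fin d) ℂ) where
  carrier := {X | X.IsHermitian}
  add_mem' := fun h1 h2 => h1.add h2
  zero_mem' := isHermitian_zero
  smul_mem' := by
    intro r X hX
    show (r • X).IsHermitian
    unfold Matrix.IsHermitian
    rw [conjTranspose_smul, hX.eq, star_trivial]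

noncomputable instance hermCore (d : ℕ) : InnerProductSpace.Core ℝ (HermSub d) where
  inner X Y := (((X : Matrix (Fin d) (Fin d) ℂ) * Y).trace).re
  conj_inner_symm := by
    intro x y
    simp only [starRingEnd_apply, star_trivial]
    rw [trace_mul_comm]
  re_inner_nonneg := by
    intro x
    simp only [RCLike.re_to_real]
    rw [trace_sq_re_eq x.2]
    exact Finset.sum_nonneg fun j _ => Finset.sum_nonneg fun k _ => Complex.normSq_nonneg _
  add_left := by
    intro x y z
    show (((x + y : Matrix (Fin d) (Fin d) ℂ)) * z).trace.re = _
    rw [add_mul, trace_add, Complex.add_re]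
  smul_left := by
    intro x y r
    show (((r • (x : Matrix (Fin d) (Fin d) ℂ))) * y).trace.re = _
    rw [smul_mul_assoc, trace_smul, starRingEnd_apply, star_trivial]
    simp
  definite := by
    intro x hx
    have hx : ((((x : Matrix (Fin d) (Fin d) ℂ)) * x).trace).re = 0 := hx
    rw [trace_sq_re_eq x.2] at hx
    have : ∀ j ∈ Finset.univ, ∀ k ∈ Finset.univ,
        Complex.normSq ((x : Matrix (Fin d) (Fin d) ℂ) k j) = 0 := by
      intro j _ k _
      have h0 := Finset.sum_eq_zero_iff_of_nonneg
        (fun j _ => Finset.sum_nonneg fun k _ => Complex.normSq_nonneg _) |>.mp hx j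
        (Finset.mem_univ j)
      exact (Finset.sum_eq_zero_iff_of_nonneg (fun k _ => Complex.normSq_nonneg _)).mp h0 k
        (Finset.mem_univ k)
    have hz : (x : Matrix (Fin d) (Fin d) ℂ) = 0 := by
      ext k j
      exact Complex.normSq_eq_zero.mp (this j (Finset.mem_univ j) k (Finset.mem_univ k))
    exact Subtype.ext hz

noncomputable instance (d : ℕ) : NormedAddCommGroup (HermSub d) :=
  (hermCore d).toNormedAddCommGroup

noncomputable instance (d : ℕ) : InnerProductSpace ℝ (HermSub d) :=
  InnerProductSpace.ofCore _

/-! ### Uniqueness of the positive self-adjoint square root -/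

variable {V : Type*} [NormedAddCommGroup V] [InnerProductSpace ℝ V] [FiniteDimensional ℝ V]

omit [FiniteDimensional ℝ V] in
lemma psd_apply_eq_zero (A : V →ₗ[ℝ] V) (hA : A.IsSymmetric)
    (hpos : ∀ v, 0 ≤ (inner ℝ v (A v) : ℝ)) {v : V} (h : (inner ℝ v (A v) : ℝ) = 0) :
    A v = 0 := by
  set w := A v with hw
  set a : ℝ := inner ℝ w w with ha
  set c : ℝ := inner ℝ w (A w) with hc
  have key : ∀ t : ℝ, 0 ≤ 2 * t * a + t ^ 2 * c := by
    intro t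
    have h0 := hpos (v + t • w)
    have expand : (inner ℝ (v + t • w) (A (v + t • w)) : ℝ)
        = (inner ℝ v (A v) : ℝ) + t * (inner ℝ v (A w) : ℝ) + t * (inner ℝ w (A v) : ℝ)
          + t ^ 2 * (inner ℝ w (A w) : ℝ) := by
      rw [map_add, _root_.map_smul, inner_add_left, inner_add_right, inner_add_right,
        real_inner_smul_left, real_inner_smul_right, real_inner_smul_left,
        real_inner_smul_right]
      ring
    have hsym : (inner ℝ v (A w) : ℝ) = a := by
      rw [real_inner_comm, hA w v, ← hw, ha, real_inner_comm]
    rw [expand, h, hsym] at h0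
    have : (inner ℝ w (A v) : ℝ) = a := by rw [← hw]
    rw [this] at h0
    linarith
  have hcnn : 0 ≤ c := hpos w
  have ha0 : a = 0 := by
    rcases eq_or_lt_of_le hcnn with hcz | hcp
    · have k1 := key 1
      have k2 := key (-1)
      rw [← hcz] at k1 k2
      linarith
    · have k := key (-a / c)
      have hc0 : c ≠ 0 := ne_of_gt hcp
      have : 2 * (-a / c) * a + (-a / c) ^ 2 * c = -(a ^ 2) / c := by
        field_simp; ring
      rw [this] at k
      have k2 : 0 ≤ -a ^ 2 := by
        have := mul_nonneg k (le_of_lt hcp)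
        rwa [div_mul_cancel₀ _ hc0] at this
      have hnn : 0 ≤ a := real_inner_self_nonneg
      nlinarith
  rw [← hw] at *
  exact inner_self_eq_zero.mp ha0

lemma posSelfAdj_sq_unique (A B : V →ₗ[ℝ] V)
    (hA : A.IsSymmetric) (hB : B.IsSymmetric)
    (hApos : ∀ v, 0 ≤ (inner ℝ v (A v) : ℝ)) (hBpos : ∀ v, 0 ≤ (inner ℝ v (B v) : ℝ))
    (hsq : A ∘ₗ A = B ∘ₗ B) : A = B := by
  set D := A - B with hD
  have hDsym : D.IsSymmetric := hA.sub hB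
  set n := Module.finrank ℝ V with hn
  have hfr : Module.finrank ℝ V = n := rfl
  have hzero : ∀ i : Fin n, D (hDsym.eigenvectorBasis hfr i) = 0 := by
    intro i
    set v := hDsym.eigenvectorBasis hfr i with hv
    set μ := hDsym.eigenvalues hfr i with hμ
    have heig : D v = (μ : ℝ) • v := hDsym.apply_eigenvectorBasis hfr i
    have hDv : D v = A v - B v := rfl
    have t1 : (inner ℝ v (A (D v)) : ℝ) = inner ℝ v (A (A v)) - inner ℝ (A v) (B v) := by
      rw [hDv, map_sub, inner_sub_right, ← hA v (B v)]
    have t2 : (inner ℝ (D v) (B v) : ℝ) = inner ℝ (A v) (B v) - inner ℝ (B v) (B v) := by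
      rw [hDv, inner_sub_left]
    have t3 : (inner ℝ v (A (A v)) : ℝ) = inner ℝ (B v) (B v) := by
      have hAB : A (A v) = B (B v) := by
        have h := LinearMap.ext_iff.mp hsq v
        simpa using h
      rw [hAB, real_inner_comm (B (B v)) v]
      exact hB (B v) v
    have hsum : (inner ℝ v (A (D v)) : ℝ) + (inner ℝ (D v) (B v) : ℝ) = 0 := by
      rw [t1, t2, t3]
      ring
    rw [heig] at hsum
    rw [_root_.map_smul, real_inner_smul_right, real_inner_smul_left] at hsum
    have hfac : μ * ((inner ℝ v (A v) : ℝ) + (inner ℝ v (B v) : ℝ)) = 0 := by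
      linear_combination hsum
    by_cases hμ0 : μ = 0
    · rw [heig, hμ0, zero_smul]
    · have hsum0 : (inner ℝ v (A v) : ℝ) + (inner ℝ v (B v) : ℝ) = 0 := by
        rcases mul_eq_zero.mp hfac with h | h
        · exact absurd h hμ0
        · exact h
      have hAv0 : (inner ℝ v (A v) : ℝ) = 0 := le_antisymm (by linarith [hBpos v]) (hApos v)
      have hBv0 : (inner ℝ v (B v) : ℝ) = 0 := by linarith
      have h1 : A v = 0 := psd_apply_eq_zero A hA hApos hAv0
      have h2 : B v = 0 := psd_apply_eq_zero B hB hBpos hBv0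
      have : D v = 0 := by rw [hD, LinearMap.sub_apply, h1, h2, sub_zero]
      rw [heig] at this
      rcases smul_eq_zero.mp this with h | h
      · exact absurd h hμ0
      · exact absurd h ((hDsym.eigenvectorBasis hfr).toBasis.ne_zero i)
  have : D = 0 := by
    apply (hDsym.eigenvectorBasis hfr).toBasis.ext
    intro i
    simpa using hzero i
  rw [hD] at this
  rw [sub_eq_zero] at this
  exact this

/-! ### Lifting Hermiticity-preserving linear maps to the Hermitian subspace -/

noncomputable def liftHerm {d : ℕ} (T : Matrix (Fin d) (Fin d) ℂ → Matrix (Fin d) (Fin d) ℂ)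
    (hlin : IsLinearMap ℝ T) (hherm : ∀ X, X.IsHermitian → (T X).IsHermitian) :
    HermSub d →ₗ[ℝ] HermSub d where
  toFun X := ⟨T X, hherm X X.2⟩
  map_add' x y := Subtype.ext (hlin.map_add x y)
  map_smul' r x := Subtype.ext (hlin.map_smul r x)

@[simp] lemma liftHerm_apply {d : ℕ} (T : Matrix (Fin d) (Fin d) ℂ → Matrix (Fin d) (Fin d) ℂ)
    (hlin : IsLinearMap ℝ T) (hherm : ∀ X, X.IsHermitian → (T X).IsHermitian) (x : HermSub d) :
    (liftHerm T hlin hherm x : Matrix (Fin d) (Fin d) ℂ) = T x := rfl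

end PWUC

open PWUC

/-- unitary conjugation of a measure basis gives a measure basis with the
same weights and Gram matrix, and the principal Wigner basis transforms covariantly:
`PW({UEᵢU†})ᵢ = U·PW(E)ᵢ·U†`. -/
theorem principal_wigner_unitary_covariance {d : ℕ} [NeZero d]
    (E : Fin (d ^ 2) → Matrix (Fin d) (Fin d) ℂ)
    (hE : IsMeasureBasis E) (hpos : ∀ i, 0 < ((E i).trace).re)
    (U : Matrix (Fin d) (Fin d) ℂ) (hU : U ∈ Matrix.unitaryGroup (Fin d) ℂ)
    (T T' : Matrix (Fin d) (Fin d) ℂ → Matrix (Fin d) (Fin d) ℂ)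
    (hT : IsInvSqrtOfFrameOp E T)
    (hT' : IsInvSqrtOfFrameOp (fun i => U * E i * Uᴴ) T') :
    IsMeasureBasis (fun i => U * E i * Uᴴ) ∧
    (∀ i, (U * E i * Uᴴ).trace = (E i).trace) ∧
    (∀ i j, ((U * E i * Uᴴ) * (U * E j * Uᴴ)).trace = (E i * E j).trace) ∧
    (∀ i, T' (U * E i * Uᴴ) = U * T (E i) * Uᴴ) := by
  obtain ⟨hEherm, hEli, hEsum, hEnn⟩ := hE
  have hU1 : U * Uᴴ = 1 := by
    have := Matrix.mem_unitaryGroup_iff.mp hU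
    rwa [Matrix.star_eq_conjTranspose] at this
  have hU2 : Uᴴ * U = 1 := by
    have := Matrix.mem_unitaryGroup_iff'.mp hU
    rwa [Matrix.star_eq_conjTranspose] at this
  have can1 : ∀ Z : Matrix (Fin d) (Fin d) ℂ, U * (Uᴴ * Z) = Z := fun Z => by
    rw [← mul_assoc, hU1, one_mul]
  have can2 : ∀ Z : Matrix (Fin d) (Fin d) ℂ, Uᴴ * (U * Z) = Z := fun Z => by
    rw [← mul_assoc, hU2, one_mul]
  have htr : ∀ X : Matrix (Fin d) (Fin d) ℂ, (U * X * Uᴴ).trace = X.trace := by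
    intro X
    rw [Matrix.trace_mul_cycle U X Uᴴ, hU2, one_mul]
  have hconjmul : ∀ X Y : Matrix (Fin d) (Fin d) ℂ,
      (U * X * Uᴴ) * (U * Y * Uᴴ) = U * (X * Y) * Uᴴ := by
    intro X Y
    simp only [mul_assoc, can2]
  have hgram : ∀ X Y : Matrix (Fin d) (Fin d) ℂ,
      ((U * X * Uᴴ) * (U * Y * Uᴴ)).trace = (X * Y).trace := fun X Y => by
    rw [hconjmul, htr]
  have hherm : ∀ X : Matrix (Fin d) (Fin d) ℂ, X.IsHermitian → (U * X * Uᴴ).IsHermitian := by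
    intro X hX
    show (U * X * Uᴴ)ᴴ = U * X * Uᴴ
    simp only [conjTranspose_mul, conjTranspose_conjTranspose, ← mul_assoc]
    rw [mul_assoc U Xᴴ Uᴴ, mul_assoc U X Uᴴ, hX.eq]
  have hherm' : ∀ X : Matrix (Fin d) (Fin d) ℂ, X.IsHermitian → (Uᴴ * X * U).IsHermitian := by
    intro X hX
    show (Uᴴ * X * U)ᴴ = Uᴴ * X * U
    simp only [conjTranspose_mul, conjTranspose_conjTranspose, ← mul_assoc]
    rw [mul_assoc Uᴴ Xᴴ U, mul_assoc Uᴴ X U, hX.eq]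
  have hsand : ∀ Z : Matrix (Fin d) (Fin d) ℂ, Uᴴ * (U * Z * Uᴴ) * U = Z := by
    intro Z
    simp only [mul_assoc, can2, hU2, mul_one]
  have hsand' : ∀ Z : Matrix (Fin d) (Fin d) ℂ, U * (Uᴴ * Z * U) * Uᴴ = Z := by
    intro Z
    simp only [mul_assoc, can1, hU1, mul_one]
  -- the conjugation linear map
  let φ : Matrix (Fin d) (Fin d) ℂ →ₗ[ℝ] Matrix (Fin d) (Fin d) ℂ :=
    { toFun := fun X => U * X * Uᴴ
      map_add' := fun X Y => by show U * (X + Y) * Uᴴ = _; rw [mul_add, add_mul]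
      map_smul' := fun r X => by simp [Matrix.mul_smul, Matrix.smul_mul] }
  have hφinj : LinearMap.ker φ = ⊥ := by
    rw [LinearMap.ker_eq_bot']
    intro X hX0
    have h2 : Uᴴ * (U * X * Uᴴ) * U = Uᴴ * 0 * U := by
      rw [show U * X * Uᴴ = φ X from rfl, hX0]
    rw [hsand] at h2
    simpa using h2
  have hmb : IsMeasureBasis (fun i => U * E i * Uᴴ) := by
    refine ⟨fun i => hherm _ (hEherm i), ?_, ?_, fun i => ?_⟩
    · exact hEli.map' φ hφinj
    · rw [show (∑ i, U * E i * Uᴴ) = U * (∑ i, E i) * Uᴴ by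
        rw [← Finset.sum_mul, ← Finset.mul_sum], hEsum, mul_one, hU1]
    · simp only [htr (E i)]
      exact (hpos i).le
  -- conjugation intertwines the frame operators
  have hSconj : ∀ Z : Matrix (Fin d) (Fin d) ℂ,
      rsFrameOp (fun i => U * E i * Uᴴ) (U * Z * Uᴴ) = U * rsFrameOp E Z * Uᴴ := by
    intro Z
    simp only [rsFrameOp]
    rw [Finset.mul_sum, Finset.sum_mul]
    refine Finset.sum_congr rfl fun j _ => ?_
    rw [hgram Z (E j), htr (E j), Matrix.mul_smul, Matrix.smul_mul]
  -- the conjugated candidate inverse square root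
  have hT2lin : IsLinearMap ℝ (fun X => U * T (Uᴴ * X * U) * Uᴴ) := by
    constructor
    · intro X Y
      show U * T (Uᴴ * (X + Y) * U) * Uᴴ = _
      rw [mul_add, add_mul, hT.1.1.map_add, mul_add, add_mul]
    · intro r X
      show U * T (Uᴴ * (r • X) * U) * Uᴴ = r • (U * T (Uᴴ * X * U) * Uᴴ)
      rw [Matrix.mul_smul, Matrix.smul_mul, hT.1.1.map_smul, Matrix.mul_smul, Matrix.smul_mul]
  have hT2herm : ∀ X : Matrix (Fin d) (Fin d) ℂ, X.IsHermitian →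
      (U * T (Uᴴ * X * U) * Uᴴ).IsHermitian := by
    intro X hX
    exact hherm _ (hT.1.2.1 _ (hherm' _ hX))
  have hT2inv : ∀ X : Matrix (Fin d) (Fin d) ℂ, X.IsHermitian →
      rsFrameOp (fun i => U * E i * Uᴴ)
        ((fun X => U * T (Uᴴ * X * U) * Uᴴ) ((fun X => U * T (Uᴴ * X * U) * Uᴴ) X)) = X := by
    intro X hX
    have e : (fun X => U * T (Uᴴ * X * U) * Uᴴ) ((fun X => U * T (Uᴴ * X * U) * Uᴴ) X)
        = U * (T (T (Uᴴ * X * U))) * Uᴴ := by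
      show U * T (Uᴴ * (U * T (Uᴴ * X * U) * Uᴴ) * U) * Uᴴ = _
      rw [hsand]
    rw [e, hSconj, hT.2 _ (hherm' _ hX), hsand']
  -- cyclic trace helpers
  have htr2 : ∀ A Y : Matrix (Fin d) (Fin d) ℂ,
      ((U * A * Uᴴ) * Y).trace = (A * (Uᴴ * Y * U)).trace := by
    intro A Y
    rw [show (U * A * Uᴴ) * Y = U * (A * (Uᴴ * Y)) from by simp only [mul_assoc],
      trace_mul_comm, show A * (Uᴴ * Y) * U = A * (Uᴴ * Y * U) from by simp only [mul_assoc]]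
  have htr3 : ∀ X W : Matrix (Fin d) (Fin d) ℂ,
      (X * (U * W * Uᴴ)).trace = ((Uᴴ * X * U) * W).trace := by
    intro X W
    rw [trace_mul_comm X (U * W * Uᴴ),
      show (U * W * Uᴴ) * X = U * (W * (Uᴴ * X)) from by simp only [mul_assoc],
      trace_mul_comm U (W * (Uᴴ * X)),
      show W * (Uᴴ * X) * U = W * (Uᴴ * X * U) from by simp only [mul_assoc],
      trace_mul_comm W (Uᴴ * X * U)]
  -- lift everything to the Hermitian subspace
  have hFherm : ∀ i, ((fun i => U * E i * Uᴴ) i).IsHermitian := fun i => hherm _ (hEherm i)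
  set Ahat : HermSub d →ₗ[ℝ] HermSub d := liftHerm T' hT'.1.1 hT'.1.2.1 with hAhat
  set Bhat : HermSub d →ₗ[ℝ] HermSub d :=
    liftHerm (fun X => U * T (Uᴴ * X * U) * Uᴴ) hT2lin hT2herm with hBhat
  set Shat : HermSub d →ₗ[ℝ] HermSub d :=
    liftHerm (rsFrameOp (fun i => U * E i * Uᴴ)) (rsFrameOp_linear _)
      (fun X hX => rsFrameOp_herm hFherm hX) with hShat
  have hSA : ∀ x : HermSub d, Shat (Ahat (Ahat x)) = x := fun x =>
    Subtype.ext (hT'.2 x x.2)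
  have hSB : ∀ x : HermSub d, Shat (Bhat (Bhat x)) = x := fun x =>
    Subtype.ext (hT2inv x x.2)
  have hSinj : Function.Injective Shat := by
    have hsurj : Function.Surjective Shat := fun x => ⟨Ahat (Ahat x), hSA x⟩
    exact (LinearMap.injective_iff_surjective).mpr hsurj
  have hsq : Ahat ∘ₗ Ahat = Bhat ∘ₗ Bhat := by
    apply LinearMap.ext
    intro x
    apply hSinj
    simp only [LinearMap.comp_apply]
    rw [hSA, hSB]
  have hAsym : Ahat.IsSymmetric := by
    intro x y
    show (((T' x : Matrix (Fin d) (Fin d) ℂ) * y).trace).re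
      = (((x : Matrix (Fin d) (Fin d) ℂ) * T' y).trace).re
    rw [hT'.1.2.2.1 x y x.2 y.2]
  have hApos : ∀ x : HermSub d, 0 ≤ (inner ℝ x (Ahat x) : ℝ) := fun x =>
    hT'.1.2.2.2 x x.2
  have hBsym : Bhat.IsSymmetric := by
    intro x y
    show (((U * T (Uᴴ * (x : Matrix (Fin d) (Fin d) ℂ) * U) * Uᴴ)
        * (y : Matrix (Fin d) (Fin d) ℂ)).trace).re
      = (((x : Matrix (Fin d) (Fin d) ℂ)
        * (U * T (Uᴴ * (y : Matrix (Fin d) (Fin d) ℂ) * U) * Uᴴ)).trace).re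
    rw [htr2, hT.1.2.2.1 _ _ (hherm' _ x.2) (hherm' _ y.2), ← htr3]
  have hBpos : ∀ x : HermSub d, 0 ≤ (inner ℝ x (Bhat x) : ℝ) := by
    intro x
    show 0 ≤ (((x : Matrix (Fin d) (Fin d) ℂ)
      * (U * T (Uᴴ * (x : Matrix (Fin d) (Fin d) ℂ) * U) * Uᴴ)).trace).re
    rw [htr3]
    exact hT.1.2.2.2 _ (hherm' _ x.2)
  have heq : Ahat = Bhat := posSelfAdj_sq_unique Ahat Bhat hAsym hBsym hApos hBpos hsq
  refine ⟨hmb, fun i => htr (E i), fun i j => hgram (E i) (E j), fun i => ?_⟩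
  have h : (Ahat ⟨U * E i * Uᴴ, hFherm i⟩ : Matrix (Fin d) (Fin d) ℂ)
      = (Bhat ⟨U * E i * Uᴴ, hFherm i⟩ : Matrix (Fin d) (Fin d) ℂ) := by rw [heq]
  have h' : T' (U * E i * Uᴴ) = U * T (Uᴴ * (U * E i * Uᴴ) * U) * Uᴴ := h
  rwa [hsand (E i)] at h'
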